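/- Let f be a natural number and S a finite multiset of real numbers with card S ≥ 2f+1. Let S' be the multiset obtained from S by removing the f largest elements and removing the f smallest elements. Then every element w of S' satisfies: at least f+1 elements of S (counted with multiplicity) are ≥ w, and at least f+1 elements of S (counted with multiplicity) are ≤ w. -/

import Mathlib

/-- The multiset obtained from `S` by removing its `k` largest elements (the last
`min k (card S)` entries of the ascending sorted list of `S`). -/
noncomputable def Multiset.removeLargest (S : Multiset ℝ) (k : ℕ) : Multiset ℝ :=
  ((S.sort (· ≤ ·)).take ((S.sort (· ≤ ·)).length - k) : List ℝ)

/-- The multiset obtained from `S` by removing its `k` smallest elements (the first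
`min k (card S)` entries of the ascending sorted list of `S`). -/
noncomputable def Multiset.removeSmallest (S : Multiset ℝ) (k : ℕ) : Multiset ℝ :=
  ((S.sort (· ≤ ·)).drop k : List ℝ)

/-- if `card S ≥ 2f+1` and `S'` is obtained from `S` by removing the `f`
largest and the `f` smallest elements, then every `w ∈ S'` has at least `f+1` elements
of `S` that are `≥ w` and at least `f+1` elements of `S` that are `≤ w`. -/

theorem stmt_1' (f : ℕ) (S : Multiset ℝ) (hS : 2 * f + 1 ≤ S.card) :
    ∀ w ∈ ((((S.sort (· ≤ ·)).take ((S.sort (· ≤ ·)).length - f) : List ℝ) : Multiset ℝ).sort (· ≤ ·)).drop f,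
      f + 1 ≤ (S.filter (fun x => w ≤ x)).card ∧
      f + 1 ≤ (S.filter (fun x => x ≤ w)).card := by
  set l : List ℝ := S.sort (· ≤ ·) with hl
  have hsort : l.Pairwise (· ≤ ·) := S.pairwise_sort _
  have hlen : l.length = S.card := S.length_sort _
  have hScoe : (l : Multiset ℝ) = S := S.sort_eq _
  set t : List ℝ := l.take (l.length - f) with ht
  have htsort : t.Pairwise (· ≤ ·) := List.Pairwise.sublist (List.take_sublist _ _) hsort
  have hts : ((t : Multiset ℝ).sort (· ≤ ·)) = t :=
    List.Perm.eq_of_pairwise' (Multiset.pairwise_sort _ _) htsort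
      (Multiset.coe_eq_coe.mp (Multiset.sort_eq _ _))
  rw [hts]
  intro w hw
  rw [List.mem_iff_getElem] at hw
  obtain ⟨j, hj, hwj⟩ := hw
  rw [List.length_drop] at hj
  have hjt : f + j < t.length := by omega
  have hjl : f + j < l.length - f := lt_of_lt_of_le hjt (by
    simp only [ht, List.length_take]; exact min_le_left _ _)
  have hil : f + j < l.length := by omega
  have hwi : w = l[f + j] := by
    rw [List.getElem_drop] at hwj
    rw [← hwj]
    simp only [ht]
    exact List.getElem_take
  set i := f + j with hi
  constructor
  · have hc : (S.filter (fun x => w ≤ x)).card = l.countP (fun x => decide (w ≤ x)) := by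
      rw [← hScoe]; simp [Multiset.filter_coe, List.countP_eq_length_filter]
    rw [hc]
    have hsub : (l.drop i).Sublist l := List.drop_sublist _ _
    have hall : ∀ x ∈ l.drop i, w ≤ x := by
      intro x hx
      rw [List.mem_iff_getElem] at hx
      obtain ⟨m, hm, hxm⟩ := hx
      rw [List.getElem_drop] at hxm
      rw [← hxm, hwi]
      exact List.Pairwise.rel_get_of_le hsort (by omega : i ≤ i + m) (l := l)
    calc f + 1 ≤ (l.drop i).length := by rw [List.length_drop]; omega
    _ = (l.drop i).countP (fun x => decide (w ≤ x)) := by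
        rw [List.countP_eq_length_filter, List.filter_eq_self.mpr (fun x hx => by
          simpa using hall x hx)]
    _ ≤ l.countP (fun x => decide (w ≤ x)) := hsub.countP_le
  · have hc : (S.filter (fun x => x ≤ w)).card = l.countP (fun x => decide (x ≤ w)) := by
      rw [← hScoe]; simp [Multiset.filter_coe, List.countP_eq_length_filter]
    rw [hc]
    have hsub : (l.take (i+1)).Sublist l := List.take_sublist _ _
    have hall : ∀ x ∈ l.take (i+1), x ≤ w := by
      intro x hx
      rw [List.mem_iff_getElem] at hx
      obtain ⟨m, hm, hxm⟩ := hx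
      rw [List.getElem_take] at hxm
      rw [← hxm, hwi]
      have hm' : m ≤ i := by
        rw [List.length_take] at hm; omega
      exact List.Pairwise.rel_get_of_le hsort hm' (l := l)
    calc f + 1 ≤ (l.take (i+1)).length := by rw [List.length_take]; omega
    _ = (l.take (i+1)).countP (fun x => decide (x ≤ w)) := by
        rw [List.countP_eq_length_filter, List.filter_eq_self.mpr (fun x hx => by
          simpa using hall x hx)]
    _ ≤ l.countP (fun x => decide (x ≤ w)) := hsub.countP_le


theorem stmt_1 (f : ℕ) (S : Multiset ℝ) (hS : 2 * f + 1 ≤ S.card) :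
    ∀ w ∈ (S.removeLargest f).removeSmallest f,
      f + 1 ≤ (S.filter (fun x => w ≤ x)).card ∧
      f + 1 ≤ (S.filter (fun x => x ≤ w)).card := by
  intro w hw
  apply stmt_1' f S hS w
  rw [Multiset.removeSmallest, Multiset.removeLargest, Multiset.mem_coe] at hw
  exact hw
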